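/- For any fixed real numbers ω_i and ω_j, the function f : (−1,1) → ℝ defined by f(r) = ∫_{−∞}^{ω_i} Φ((ω_j − r·x)/√(1−r²)) φ(x) dx is differentiable on (−1,1), with derivative f'(r) = φ(ω_i) · φ((ω_j − r·ω_i)/√(1−r²)) / √(1−r²) for every r ∈ (−1,1); in particular f'(r) > 0. -/

import Mathlib

open MeasureTheory Real

/-- The standard normal density `φ(x) = (2π)^{-1/2} exp(−x²/2)`. -/
noncomputable def stdNormalPDF (x : ℝ) : ℝ :=
  (Real.sqrt (2 * Real.pi))⁻¹ * Real.exp (-x ^ 2 / 2)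

/-- The standard normal distribution function `Φ(x) = ∫_{−∞}^x φ(u) du`. -/
noncomputable def stdNormalCDF (x : ℝ) : ℝ :=
  ∫ u in Set.Iic x, stdNormalPDF u

section Helpers

open Set Filter Topology

lemma phi_pos (x : ℝ) : 0 < stdNormalPDF x := by unfold stdNormalPDF; positivity

lemma phi_cont : Continuous stdNormalPDF := by unfold stdNormalPDF; fun_prop

lemma phi_le (x : ℝ) : stdNormalPDF x ≤ (Real.sqrt (2 * Real.pi))⁻¹ := by
  unfold stdNormalPDF
  have h1 : Real.exp (-x ^ 2 / 2) ≤ 1 := by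
    rw [Real.exp_le_one_iff]; nlinarith [sq_nonneg x]
  have h2 : (0:ℝ) ≤ (Real.sqrt (2 * Real.pi))⁻¹ := by positivity
  nlinarith

lemma phi_eq : stdNormalPDF = fun x => (Real.sqrt (2 * Real.pi))⁻¹ * Real.exp (-(1/2) * x ^ 2) := by
  funext x; unfold stdNormalPDF; ring_nf

lemma phi_integrable : Integrable stdNormalPDF := by
  rw [phi_eq]
  exact (integrable_exp_neg_mul_sq (by norm_num : (0:ℝ) < 1/2)).const_mul _

lemma phi_tendsto_atBot : Tendsto stdNormalPDF atBot (𝓝 0) := by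
  rw [phi_eq]
  have hsq : Tendsto (fun x : ℝ => x ^ 2) atBot atTop := by
    have h := (tendsto_pow_atTop (two_ne_zero) : Tendsto (fun y : ℝ => y ^ 2) atTop atTop).comp
      (tendsto_abs_atBot_atTop : Tendsto (abs : ℝ → ℝ) atBot atTop)
    refine h.congr fun x => ?_
    simp [Function.comp, sq_abs]
  have h1 : Tendsto (fun x : ℝ => -(1/2) * x ^ 2) atBot atBot :=
    hsq.const_mul_atTop_of_neg (show (-(1/2):ℝ) < 0 by norm_num)
  have h2 := Real.tendsto_exp_atBot.comp h1
  have h3 := h2.const_mul ((Real.sqrt (2 * Real.pi))⁻¹)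
  simpa [Function.comp] using h3

lemma abs_mul_phi_integrable : Integrable (fun x => |x| * stdNormalPDF x) := by
  have h1 : Integrable (fun x : ℝ => x * stdNormalPDF x) := by
    rw [phi_eq]
    have := (integrable_mul_exp_neg_mul_sq (by norm_num : (0:ℝ) < 1/2)).const_mul
      ((Real.sqrt (2 * Real.pi))⁻¹)
    refine this.congr (Eventually.of_forall fun x => ?_)
    ring
  refine h1.abs.congr (Eventually.of_forall fun x => ?_)
  simp [abs_mul, abs_of_pos (phi_pos x)]

lemma phi_hasDerivAt (x : ℝ) : HasDerivAt stdNormalPDF (-x * stdNormalPDF x) x := by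
  have h : HasDerivAt (fun x : ℝ => -x ^ 2 / 2) (-x) x := by
    have := ((hasDerivAt_pow 2 x).neg).div_const 2
    simpa using this.congr_deriv (by ring)
  have := (h.exp.const_mul ((Real.sqrt (2 * Real.pi))⁻¹))
  unfold stdNormalPDF
  refine this.congr_deriv ?_
  ring

lemma cdf_hasDerivAt (x : ℝ) : HasDerivAt stdNormalCDF (stdNormalPDF x) x := by
  have key : ∀ y : ℝ, stdNormalCDF y = stdNormalCDF 0 + ∫ t in (0:ℝ)..y, stdNormalPDF t := by
    intro y
    have := intervalIntegral.integral_Iic_sub_Iic (phi_integrable.integrableOn)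
      (phi_integrable.integrableOn) (a := 0) (b := y)
    unfold stdNormalCDF
    linarith [this]
  have hd : HasDerivAt (fun y => stdNormalCDF 0 + ∫ t in (0:ℝ)..y, stdNormalPDF t)
      (stdNormalPDF x) x := by
    refine HasDerivAt.const_add _ ?_
    exact intervalIntegral.integral_hasDerivAt_right
      (phi_integrable.intervalIntegrable)
      (phi_cont.stronglyMeasurableAtFilter _ _)
      (phi_cont.continuousAt)
  exact hd.congr_of_eventuallyEq (Eventually.of_forall key) |>.congr_deriv rfl

lemma cdf_cont : Continuous stdNormalCDF :=
  continuous_iff_continuousAt.2 fun x => (cdf_hasDerivAt x).continuousAt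

lemma cdf_nonneg (x : ℝ) : 0 ≤ stdNormalCDF x :=
  setIntegral_nonneg measurableSet_Iic fun y _ => (phi_pos y).le

lemma cdf_le_one (x : ℝ) : stdNormalCDF x ≤ 1 := by
  have h1 : stdNormalCDF x ≤ ∫ u, stdNormalPDF u :=
    setIntegral_le_integral phi_integrable (Eventually.of_forall fun y => (phi_pos y).le)
  have h2 : (∫ u, stdNormalPDF u) = 1 := by
    rw [phi_eq, integral_const_mul, integral_gaussian]
    rw [show Real.pi / (1/2) = 2 * Real.pi by ring]
    rw [inv_mul_cancel₀ (by positivity)]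
  linarith

lemma hasDerivAt_u (ωj x r : ℝ) (hr : r ^ 2 < 1) :
    HasDerivAt (fun r : ℝ => (ωj - r * x) / Real.sqrt (1 - r ^ 2))
      ((r * ωj - x) / Real.sqrt (1 - r ^ 2) ^ 3) r := by
  have h1 : (0:ℝ) < 1 - r ^ 2 := by linarith
  have hs : 0 < Real.sqrt (1 - r ^ 2) := Real.sqrt_pos.2 h1
  have hs2 : Real.sqrt (1 - r ^ 2) ^ 2 = 1 - r ^ 2 := Real.sq_sqrt h1.le
  set s := Real.sqrt (1 - r ^ 2) with hsdef
  have hinner : HasDerivAt (fun r : ℝ => 1 - r ^ 2) (-(2 * r)) r := by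
    simpa using ((hasDerivAt_pow 2 r).const_sub 1)
  have hsq : HasDerivAt (fun r : ℝ => Real.sqrt (1 - r ^ 2)) (-r / s) r := by
    have h := (Real.hasDerivAt_sqrt (ne_of_gt h1)).comp r hinner
    refine h.congr_deriv ?_
    field_simp
    ring
  have hnum : HasDerivAt (fun r : ℝ => ωj - r * x) (-x) r := by
    simpa using ((hasDerivAt_id r).mul_const x).const_sub ωj
  have h := hnum.div hsq (ne_of_gt hs)
  refine h.congr_deriv ?_
  field_simp
  rw [← hsdef]
  linear_combination (-x * s ^ 2) * hs2

lemma hasDerivAt_G (ωj r : ℝ) (hr : r ^ 2 < 1) (x : ℝ) :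
    HasDerivAt
      (fun x => stdNormalPDF x * stdNormalPDF ((ωj - r * x) / Real.sqrt (1 - r ^ 2)) /
        Real.sqrt (1 - r ^ 2))
      (stdNormalPDF ((ωj - r * x) / Real.sqrt (1 - r ^ 2)) *
        ((r * ωj - x) / Real.sqrt (1 - r ^ 2) ^ 3) * stdNormalPDF x) x := by
  have h1 : (0:ℝ) < 1 - r ^ 2 := by linarith
  have hs : 0 < Real.sqrt (1 - r ^ 2) := Real.sqrt_pos.2 h1
  have hs2 : Real.sqrt (1 - r ^ 2) ^ 2 = 1 - r ^ 2 := Real.sq_sqrt h1.le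
  set s := Real.sqrt (1 - r ^ 2) with hsdef
  have haff : HasDerivAt (fun x : ℝ => (ωj - r * x) / s) (-r / s) x := by
    have := (((hasDerivAt_id x).const_mul r).const_sub ωj).div_const s
    simpa [neg_div] using this
  have h2 : HasDerivAt (fun x : ℝ => stdNormalPDF ((ωj - r * x) / s))
      (-((ωj - r * x) / s) * stdNormalPDF ((ωj - r * x) / s) * (-r / s)) x :=
    (phi_hasDerivAt _).comp x haff
  have h3 := ((phi_hasDerivAt x).mul h2).div_const s
  refine h3.congr_deriv ?_
  set pu := stdNormalPDF ((ωj - r * x) / s) with hpu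
  set px := stdNormalPDF x with hpx
  field_simp
  linear_combination (-x * pu * px) * hs2

end Helpers

/-- For fixed `ω_i, ω_j ∈ ℝ`, the function
`f(r) = ∫_{−∞}^{ω_i} Φ((ω_j − r·x)/√(1−r²)) φ(x) dx` is differentiable on `(−1,1)` with
`f'(r) = φ(ω_i)·φ((ω_j − r·ω_i)/√(1−r²)) / √(1−r²)`, which is positive. -/
theorem stmt4 (ωi ωj : ℝ) :
    ∀ r ∈ Set.Ioo (-1 : ℝ) 1,
      HasDerivAt
        (fun r : ℝ =>
          ∫ x in Set.Iic ωi,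
            stdNormalCDF ((ωj - r * x) / Real.sqrt (1 - r ^ 2)) * stdNormalPDF x)
        (stdNormalPDF ωi * stdNormalPDF ((ωj - r * ωi) / Real.sqrt (1 - r ^ 2)) /
          Real.sqrt (1 - r ^ 2)) r ∧
      0 < stdNormalPDF ωi * stdNormalPDF ((ωj - r * ωi) / Real.sqrt (1 - r ^ 2)) /
          Real.sqrt (1 - r ^ 2) := by
  intro r₀ hr₀
  obtain ⟨hl, hu⟩ := hr₀
  have habs : |r₀| < 1 := abs_lt.2 ⟨hl, hu⟩
  have habs0 : (0:ℝ) ≤ |r₀| := abs_nonneg _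
  set ε : ℝ := (1 - |r₀|) / 2 with hεdef
  have hεpos : 0 < ε := by rw [hεdef]; linarith
  set ρ : ℝ := (1 + |r₀|) / 2 with hρdef
  have hρ1 : ρ < 1 := by rw [hρdef]; linarith
  have hρ0 : (0:ℝ) < ρ := by rw [hρdef]; linarith
  have hball : ∀ r ∈ Metric.ball r₀ ε, |r| ≤ ρ := by
    intro r hr
    rw [Metric.mem_ball, Real.dist_eq] at hr
    have h1 := abs_sub_abs_le_abs_sub r r₀
    rw [hρdef]
    rw [hεdef] at hr
    linarith
  have hr2lt : ∀ r ∈ Metric.ball r₀ ε, r ^ 2 < 1 := by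
    intro r hr
    have h := hball r hr
    nlinarith [abs_nonneg r, sq_abs r]
  set δ : ℝ := 1 - ρ ^ 2 with hδdef
  have hδ : 0 < δ := by rw [hδdef]; nlinarith
  have hsδ : 0 < Real.sqrt δ := Real.sqrt_pos.2 hδ
  have hsbound : ∀ r ∈ Metric.ball r₀ ε, Real.sqrt δ ≤ Real.sqrt (1 - r ^ 2) := by
    intro r hr
    apply Real.sqrt_le_sqrt
    have h := hball r hr
    have h2 : r ^ 2 ≤ ρ ^ 2 := by nlinarith [sq_abs r, abs_nonneg r]
    rw [hδdef]; linarith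
  have hr₀2 : r₀ ^ 2 < 1 := hr2lt r₀ (Metric.mem_ball_self hεpos)
  have h01 : (0:ℝ) < 1 - r₀ ^ 2 := by linarith
  have hs₀ : 0 < Real.sqrt (1 - r₀ ^ 2) := Real.sqrt_pos.2 h01
  set F' : ℝ → ℝ → ℝ := fun r x =>
    stdNormalPDF ((ωj - r * x) / Real.sqrt (1 - r ^ 2)) *
      ((r * ωj - x) / Real.sqrt (1 - r ^ 2) ^ 3) * stdNormalPDF x with hF'def
  set bound : ℝ → ℝ := fun x =>
    (Real.sqrt (2 * Real.pi))⁻¹ * ((|ωj| + |x|) * (Real.sqrt δ ^ 3)⁻¹) * stdNormalPDF x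
    with hbdef
  have contF : ∀ r : ℝ, Continuous fun x =>
      stdNormalCDF ((ωj - r * x) / Real.sqrt (1 - r ^ 2)) * stdNormalPDF x := fun r =>
    ((cdf_cont.comp (((continuous_const.sub (continuous_const.mul continuous_id))).div_const
      _)).mul phi_cont)
  have contF' : ∀ r : ℝ, Continuous (F' r) := fun r =>
    (((phi_cont.comp (((continuous_const.sub (continuous_const.mul continuous_id))).div_const
      _)).mul (((continuous_const.sub continuous_id)).div_const _)).mul phi_cont)
  -- integrability of F r₀
  have hFint : Integrable
      (fun x => stdNormalCDF ((ωj - r₀ * x) / Real.sqrt (1 - r₀ ^ 2)) * stdNormalPDF x)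
      (MeasureTheory.volume.restrict (Set.Iic ωi)) := by
    refine Integrable.mono' (phi_integrable.restrict)
      (contF r₀).aestronglyMeasurable.restrict
      (Filter.Eventually.of_forall fun x => ?_)
    rw [Real.norm_eq_abs, abs_mul, abs_of_nonneg (cdf_nonneg _), abs_of_pos (phi_pos _)]
    nlinarith [cdf_le_one ((ωj - r₀ * x) / Real.sqrt (1 - r₀ ^ 2)),
      cdf_nonneg ((ωj - r₀ * x) / Real.sqrt (1 - r₀ ^ 2)), phi_pos x]
  -- the uniform bound
  have hbnd : ∀ x : ℝ, ∀ r ∈ Metric.ball r₀ ε, ‖F' r x‖ ≤ bound x := by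
    intro x r hr
    have h1 : (0:ℝ) < 1 - r ^ 2 := by have := hr2lt r hr; linarith
    have hs : 0 < Real.sqrt (1 - r ^ 2) := Real.sqrt_pos.2 h1
    have hrle : |r| ≤ 1 := (hball r hr).trans hρ1.le
    rw [hF'def, hbdef]
    simp only
    rw [Real.norm_eq_abs, abs_mul, abs_mul, abs_of_pos (phi_pos _), abs_of_pos (phi_pos _),
      abs_div, abs_of_pos (pow_pos hs 3), div_eq_mul_inv]
    have e2 : |r * ωj - x| ≤ |ωj| + |x| := by
      calc |r * ωj - x| ≤ |r * ωj| + |x| := abs_sub _ _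
        _ ≤ |ωj| + |x| := by
          rw [abs_mul]
          nlinarith [abs_nonneg ωj, abs_nonneg r]
    have e3 : Real.sqrt δ ^ 3 ≤ Real.sqrt (1 - r ^ 2) ^ 3 :=
      pow_le_pow_left₀ hsδ.le (hsbound r hr) 3
    have e3' : (Real.sqrt (1 - r ^ 2) ^ 3)⁻¹ ≤ (Real.sqrt δ ^ 3)⁻¹ :=
      inv_anti₀ (by positivity) e3
    have h2 : |r * ωj - x| * (Real.sqrt (1 - r ^ 2) ^ 3)⁻¹ ≤
        (|ωj| + |x|) * (Real.sqrt δ ^ 3)⁻¹ :=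
      mul_le_mul e2 e3' (by positivity) (by positivity)
    have h3 : stdNormalPDF ((ωj - r * x) / Real.sqrt (1 - r ^ 2)) *
        (|r * ωj - x| * (Real.sqrt (1 - r ^ 2) ^ 3)⁻¹) ≤
        (Real.sqrt (2 * Real.pi))⁻¹ * ((|ωj| + |x|) * (Real.sqrt δ ^ 3)⁻¹) :=
      mul_le_mul (phi_le _) h2 (by positivity) (by positivity)
    exact mul_le_mul_of_nonneg_right h3 (phi_pos x).le
  -- integrability of the bound
  have hbint : Integrable bound (MeasureTheory.volume.restrict (Set.Iic ωi)) := by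
    have h1 : Integrable (fun x => |ωj| * stdNormalPDF x + |x| * stdNormalPDF x) :=
      (phi_integrable.const_mul _).add abs_mul_phi_integrable
    have h2 := h1.const_mul ((Real.sqrt (2 * Real.pi))⁻¹ * (Real.sqrt δ ^ 3)⁻¹)
    have h3 : Integrable bound := by
      refine h2.congr (Filter.Eventually.of_forall fun x => ?_)
      rw [hbdef]
      ring
    exact h3.restrict
  -- differentiability in r
  have hdiff : ∀ x : ℝ, ∀ r ∈ Metric.ball r₀ ε,
      HasDerivAt (fun r : ℝ =>
        stdNormalCDF ((ωj - r * x) / Real.sqrt (1 - r ^ 2)) * stdNormalPDF x) (F' r x) r := by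
    intro x r hr
    have h := ((cdf_hasDerivAt ((ωj - r * x) / Real.sqrt (1 - r ^ 2))).comp r
      (hasDerivAt_u ωj x r (hr2lt r hr))).mul_const (stdNormalPDF x)
    exact h
  have main := hasDerivAt_integral_of_dominated_loc_of_deriv_le
    (μ := MeasureTheory.volume.restrict (Set.Iic ωi))
    (F := fun r x => stdNormalCDF ((ωj - r * x) / Real.sqrt (1 - r ^ 2)) * stdNormalPDF x)
    (F' := F') (bound := bound) (x₀ := r₀) (Metric.ball_mem_nhds r₀ hεpos)
    (Filter.Eventually.of_forall fun r => (contF r).aestronglyMeasurable.restrict)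
    hFint
    ((contF' r₀).aestronglyMeasurable.restrict)
    (Filter.Eventually.of_forall fun x r hr => hbnd x r hr)
    hbint
    (Filter.Eventually.of_forall fun x r hr => hdiff x r hr)
  obtain ⟨hF'int, hderiv⟩ := main
  -- evaluate the integral of F' r₀ via FTC on (-∞, ωi]
  have htend : Filter.Tendsto (fun x => stdNormalPDF x *
      stdNormalPDF ((ωj - r₀ * x) / Real.sqrt (1 - r₀ ^ 2)) / Real.sqrt (1 - r₀ ^ 2))
      Filter.atBot (nhds 0) := by
    have hg : Filter.Tendsto (fun x => stdNormalPDF x *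
        ((Real.sqrt (2 * Real.pi))⁻¹ / Real.sqrt (1 - r₀ ^ 2))) Filter.atBot (nhds 0) := by
      have := phi_tendsto_atBot.mul_const ((Real.sqrt (2 * Real.pi))⁻¹ / Real.sqrt (1 - r₀ ^ 2))
      simpa using this
    refine squeeze_zero (fun x => div_nonneg (mul_nonneg (phi_pos _).le (phi_pos _).le) (Real.sqrt_nonneg _)) (fun x => ?_) hg
    rw [mul_div_assoc]
    refine mul_le_mul_of_nonneg_left ?_ (phi_pos x).le
    exact div_le_div_of_nonneg_right (phi_le _) hs₀.le
  have hint_eq : (∫ x in Set.Iic ωi, F' r₀ x) =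
      stdNormalPDF ωi * stdNormalPDF ((ωj - r₀ * ωi) / Real.sqrt (1 - r₀ ^ 2)) /
        Real.sqrt (1 - r₀ ^ 2) := by
    have h := MeasureTheory.integral_Iic_of_hasDerivAt_of_tendsto' (a := ωi)
      (m := 0)
      (f := fun x => stdNormalPDF x * stdNormalPDF ((ωj - r₀ * x) / Real.sqrt (1 - r₀ ^ 2)) /
        Real.sqrt (1 - r₀ ^ 2))
      (f' := F' r₀)
      (fun x _ => hasDerivAt_G ωj r₀ hr₀2 x) hF'int htend
    rw [h, sub_zero]
  rw [hint_eq] at hderiv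
  exact ⟨hderiv, div_pos (mul_pos (phi_pos _) (phi_pos _)) hs₀⟩
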